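/- If X and Y are finite-dimensional Banach spaces over the field 𝕂 = ℝ or ℂ, then the pair (X, Y) has the Bishop–Phelps–Bollobás–Zizler property (BPBZp). -/
import Mathlib


/-- The Bishop–Phelps–Bollobás–Zizler property (BPBZp) for a pair of normed spaces. -/
def BPBZp (𝕂 : Type*) [RCLike 𝕂] (X Y : Type*) [NormedAddCommGroup X] [NormedSpace 𝕂 X]
    [NormedAddCommGroup Y] [NormedSpace 𝕂 Y] : Prop :=
  ∀ ε : ℝ, 0 < ε → ∃ η : ℝ, 0 < η ∧
    ∀ (T : X →L[𝕂] Y) (x₀ : X) (y₀ : Y →L[𝕂] 𝕂),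
      ‖T‖ = 1 → ‖x₀‖ = 1 → ‖y₀‖ = 1 → 1 - η < ‖y₀ (T x₀)‖ →
      ∃ (S : X →L[𝕂] Y) (x₁ : X) (y₁ : Y →L[𝕂] 𝕂),
        ‖S‖ = 1 ∧ ‖x₁‖ = 1 ∧ ‖y₁‖ = 1 ∧ ‖y₁ (S x₁)‖ = 1 ∧
        ‖x₁ - x₀‖ < ε ∧ ‖y₁ - y₀‖ < ε ∧ ‖S - T‖ < ε

/-- If `X` and `Y` are finite-dimensional Banach spaces, then `(X, Y)` has the BPBZp. -/
theorem bpbzp_of_finiteDimensional (𝕂 : Type*) [RCLike 𝕂] (X Y : Type*)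
    [NormedAddCommGroup X] [NormedSpace 𝕂 X] [CompleteSpace X] [FiniteDimensional 𝕂 X]
    [NormedAddCommGroup Y] [NormedSpace 𝕂 Y] [CompleteSpace Y] [FiniteDimensional 𝕂 Y] :
    BPBZp 𝕂 X Y := by
  haveI : ProperSpace (X →L[𝕂] Y) := FiniteDimensional.proper 𝕂 _
  haveI : ProperSpace (Y →L[𝕂] 𝕂) := FiniteDimensional.proper 𝕂 _
  haveI : ProperSpace X := FiniteDimensional.proper 𝕂 _
  intro ε hε
  by_contra h
  push_neg at h
  choose T x y hT hx hy hval hno using fun n : ℕ =>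
    h (1 / (n + 1)) (by positivity)
  set K : Set ((X →L[𝕂] Y) × X × (Y →L[𝕂] 𝕂)) :=
    (Metric.sphere 0 1) ×ˢ (Metric.sphere 0 1) ×ˢ (Metric.sphere 0 1) with hKdef
  have hKc : IsCompact K :=
    (isCompact_sphere 0 1).prod ((isCompact_sphere 0 1).prod (isCompact_sphere 0 1))
  have hz : ∀ n : ℕ, (T n, x n, y n) ∈ K := by
    intro n
    refine ⟨?_, ?_, ?_⟩ <;> simp [mem_sphere_zero_iff_norm, hT, hx, hy]
  obtain ⟨p, hp, φ, hφ, hconv⟩ := hKc.tendsto_subseq hz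
  obtain ⟨S, x₁, y₁⟩ := p
  have hS : ‖S‖ = 1 := by simpa [mem_sphere_zero_iff_norm, hKdef] using hp.1
  have hx₁ : ‖x₁‖ = 1 := by simpa [mem_sphere_zero_iff_norm, hKdef] using hp.2.1
  have hy₁ : ‖y₁‖ = 1 := by simpa [mem_sphere_zero_iff_norm, hKdef] using hp.2.2
  -- continuity of the evaluation
  have hF : Continuous (fun p : (X →L[𝕂] Y) × X × (Y →L[𝕂] 𝕂) => ‖p.2.2 (p.1 p.2.1)‖) := by
    fun_prop
  have hvlim : Filter.Tendsto (fun k => ‖y (φ k) (T (φ k) (x (φ k)))‖)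
      Filter.atTop (nhds ‖y₁ (S x₁)‖) := (hF.tendsto _).comp hconv
  have hone : ‖y₁ (S x₁)‖ = 1 := by
    have hle : ‖y₁ (S x₁)‖ ≤ 1 := by
      calc ‖y₁ (S x₁)‖ ≤ ‖y₁‖ * ‖S x₁‖ := y₁.le_opNorm _
        _ ≤ ‖y₁‖ * (‖S‖ * ‖x₁‖) := by
            exact mul_le_mul_of_nonneg_left (S.le_opNorm _) (norm_nonneg _)
        _ = 1 := by rw [hS, hx₁, hy₁]; ring
    have hge : (1:ℝ) ≤ ‖y₁ (S x₁)‖ := by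
      have h1 : Filter.Tendsto (fun k : ℕ => 1 - 1 / ((φ k : ℝ) + 1))
          Filter.atTop (nhds 1) := by
        have : Filter.Tendsto (fun k : ℕ => 1 / ((φ k : ℝ) + 1)) Filter.atTop (nhds 0) :=
          (tendsto_one_div_add_atTop_nhds_zero_nat).comp hφ.tendsto_atTop
        simpa using (tendsto_const_nhds.sub this)
      refine le_of_tendsto_of_tendsto h1 hvlim ?_
      filter_upwards with k using (hval (φ k)).le
    linarith
  -- componentwise convergence
  have hT' : Filter.Tendsto (fun k => T (φ k)) Filter.atTop (nhds S) :=
    (continuous_fst.tendsto _).comp hconv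
  have hx' : Filter.Tendsto (fun k => x (φ k)) Filter.atTop (nhds x₁) :=
    ((continuous_fst.comp continuous_snd).tendsto _).comp hconv
  have hy' : Filter.Tendsto (fun k => y (φ k)) Filter.atTop (nhds y₁) :=
    ((continuous_snd.comp continuous_snd).tendsto _).comp hconv
  rw [Metric.tendsto_atTop] at hT' hx' hy'
  obtain ⟨N₁, hN₁⟩ := hT' ε hε
  obtain ⟨N₂, hN₂⟩ := hx' ε hε
  obtain ⟨N₃, hN₃⟩ := hy' ε hε
  set N := max N₁ (max N₂ N₃)
  have := hno (φ N) S x₁ y₁ hS hx₁ hy₁ hone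
    (by simpa [dist_eq_norm'] using hN₂ N (le_max_of_le_right (le_max_left _ _)))
    (by simpa [dist_eq_norm'] using hN₃ N (le_max_of_le_right (le_max_right _ _)))
  exact absurd (by simpa [dist_eq_norm'] using hN₁ N (le_max_left _ _)) (not_lt.mpr this)
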